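/- With notation as in the quasi-cyclic correspondence, for a,b ∈ F_q^{ℓm}: the Euclidean inner products (T^{ℓk}(a))·b vanish for all 0 ≤ k ≤ m−1 if and only if the Hermitian inner product ⟨φ(a), φ(b)⟩ vanishes in R = F_q[Y]/(Y^m−1), where the conjugation on R sends Y to Y^{m−1} and ⟨x,y⟩ = Σ_{j=0}^{ℓ−1} x_j · conj(y_j). -/

import Mathlib

set_option synthInstance.maxHeartbeats 400000

open Polynomial

/-- The ring `R = F_q[Y]/(Y^m - 1)`. -/
noncomputable abbrev cycRing (F : Type*) [Field F] (m : ℕ) :=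
  Polynomial F ⧸ Ideal.span {(X : Polynomial F) ^ m - 1}

/-- The standard identification `φ : F_q^{ℓm} → R^ℓ`, sending `c = (c_{i,j})`
to `(c_0(Y), …, c_{ℓ-1}(Y))` with `c_j(Y) = Σ_i c_{i,j} Y^i`. -/
noncomputable def phiMap {F : Type*} [Field F] {ℓ m : ℕ} [NeZero m]
    (c : ZMod m → Fin ℓ → F) (j : Fin ℓ) : cycRing F m :=
  Ideal.Quotient.mk (Ideal.span {(X : Polynomial F) ^ m - 1})
    (∑ i : ZMod m, C (c i j) * X ^ i.val)

theorem cycRing_li (F : Type*) [Field F] (m : ℕ) [NeZero m] :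
    LinearIndependent F (fun x : ZMod m =>
      (Ideal.Quotient.mk (Ideal.span {(X : Polynomial F) ^ m - 1}) X) ^ x.val) := by
  have hmonic : ((X : Polynomial F) ^ m - 1).Monic := by
    simpa using monic_X_pow_sub_C (1:F) (NeZero.ne m)
  have hdeg : ((X : Polynomial F) ^ m - 1).natDegree = m := by
    simpa using natDegree_X_pow_sub_C (n := m) (r := (1:F))
  have h1 := (AdjoinRoot.powerBasis' hmonic).basis.linearIndependent
  rw [show ⇑(AdjoinRoot.powerBasis' hmonic).basis
      = fun i : Fin ((X : Polynomial F) ^ m - 1).natDegree =>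
        (AdjoinRoot.root _) ^ (i : ℕ) from ?_] at h1
  · exact h1.comp (fun x : ZMod m =>
      (⟨x.val, by simpa [AdjoinRoot.powerBasis'_dim, hdeg] using x.val_lt⟩ : Fin _))
      (fun x y hxy => ZMod.val_injective _ (by simpa [Fin.mk.injEq] using hxy))
  · funext i
    rw [(AdjoinRoot.powerBasis' hmonic).basis_eq_pow i]; rfl

theorem shift_orthogonal_iff_hermitian {F : Type*} [Field F] {ℓ m : ℕ} [NeZero m]
    (conj : cycRing F m →ₐ[F] cycRing F m)
    (hconj : conj (Ideal.Quotient.mk (Ideal.span {(X : Polynomial F) ^ m - 1}) X) =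
      Ideal.Quotient.mk (Ideal.span {(X : Polynomial F) ^ m - 1}) (X ^ (m - 1)))
    (a b : ZMod m → Fin ℓ → F) :
    (∀ k : ZMod m, ∑ i : ZMod m, ∑ j : Fin ℓ, a (i - k) j * b i j = 0) ↔
      ∑ j : Fin ℓ, phiMap a j * conj (phiMap b j) = 0 := by
  classical
  set I : Ideal (Polynomial F) := Ideal.span {(X : Polynomial F) ^ m - 1} with hIdef
  set π : Polynomial F →+* cycRing F m := Ideal.Quotient.mk I with hπ
  set Y : cycRing F m := π X with hYdef
  -- Y^m = 1
  have hYm : Y ^ m = 1 := by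
    have h : π ((X : Polynomial F) ^ m) = π 1 :=
      Ideal.Quotient.eq.mpr (by rw [hIdef]; exact Ideal.mem_span_singleton_self _)
    simpa [map_pow, map_one] using h
  have hmod : ∀ n : ℕ, Y ^ n = Y ^ (n % m) := by
    intro n
    conv_lhs => rw [← Nat.div_add_mod n m]
    rw [pow_add, pow_mul, hYm, one_pow, one_mul]
  have hpow : ∀ s t : ℕ, ((s : ZMod m) = (t : ZMod m)) → Y ^ s = Y ^ t := by
    intro s t h
    rw [hmod s, hmod t]
    exact congrArg (Y ^ ·) ((ZMod.natCast_eq_natCast_iff s t m).mp h)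
  -- key: coordinates w.r.t. the basis Y^d
  have hkey : ∀ c : ZMod m → F,
      ((∑ d : ZMod m, c d • Y ^ (ZMod.val d)) = 0 ↔ ∀ d, c d = 0) := by
    intro c
    constructor
    · intro h0 d
      exact Fintype.linearIndependent_iff.mp (cycRing_li F m) c h0 d
    · intro h
      simp [h]
  -- conj on powers of Y
  have hconjY : ∀ n : ℕ, conj (Y ^ n) = Y ^ ((m - 1) * n) := by
    intro n
    rw [map_pow, hconj, ← map_pow, ← pow_mul, hYdef, ← map_pow]
  -- exponent identity
  have hexp : ∀ i' i : ZMod m,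
      Y ^ (ZMod.val i' + (m - 1) * ZMod.val i) = Y ^ (ZMod.val (i' - i)) := by
    intro i' i
    apply hpow
    have h1 : ((m - 1 : ℕ) : ZMod m) = -1 := by
      rw [Nat.cast_sub (Nat.one_le_iff_ne_zero.mpr (NeZero.ne m)), ZMod.natCast_self,
        Nat.cast_one, zero_sub]
    rw [Nat.cast_add, Nat.cast_mul, h1, ZMod.natCast_rightInverse i',
      ZMod.natCast_rightInverse i, ZMod.natCast_rightInverse (i' - i)]
    ring
  -- phiMap as smul sum
  have hphi : ∀ (c : ZMod m → Fin ℓ → F) (j : Fin ℓ),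
      phiMap c j = ∑ i : ZMod m, c i j • Y ^ (ZMod.val i) := by
    intro c j
    simp only [phiMap, map_sum, map_mul, map_pow]
    refine Finset.sum_congr rfl fun i _ => ?_
    exact ((Algebra.smul_def (c i j) (Y ^ ZMod.val i)).trans rfl).symm
  have hconjb : ∀ j : Fin ℓ,
      conj (phiMap b j) = ∑ i : ZMod m, b i j • Y ^ ((m - 1) * ZMod.val i) := by
    intro j
    rw [hphi b j, map_sum]
    refine Finset.sum_congr rfl fun i _ => ?_
    rw [map_smul, hconjY]
  -- compute the Hermitian sum
  have hS : ∑ j : Fin ℓ, phiMap a j * conj (phiMap b j)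
      = ∑ d : ZMod m,
          (∑ i : ZMod m, ∑ j : Fin ℓ, a (i + d) j * b i j) • Y ^ (ZMod.val d) := by
    calc ∑ j : Fin ℓ, phiMap a j * conj (phiMap b j)
        = ∑ j : Fin ℓ, ∑ i' : ZMod m, ∑ i : ZMod m,
            (a i' j * b i j) • Y ^ (ZMod.val (i' - i)) := by
          refine Finset.sum_congr rfl fun j _ => ?_
          rw [hphi a j, hconjb j, Finset.sum_mul_sum]
          refine Finset.sum_congr rfl fun i' _ => Finset.sum_congr rfl fun i _ => ?_
          rw [smul_mul_smul_comm, ← pow_add, hexp]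
      _ = ∑ i' : ZMod m, ∑ i : ZMod m,
            (∑ j : Fin ℓ, a i' j * b i j) • Y ^ (ZMod.val (i' - i)) := by
          rw [Finset.sum_comm]
          refine Finset.sum_congr rfl fun i' _ => ?_
          rw [Finset.sum_comm]
          exact Finset.sum_congr rfl fun i _ => (Finset.sum_smul).symm
      _ = ∑ i : ZMod m, ∑ d : ZMod m,
            (∑ j : Fin ℓ, a (d + i) j * b i j) • Y ^ (ZMod.val d) := by
          rw [Finset.sum_comm]
          refine Finset.sum_congr rfl fun i _ => ?_
          refine (Fintype.sum_equiv (Equiv.addRight i) _ _ fun d => ?_).symm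
          simp [add_sub_cancel_right]
      _ = ∑ d : ZMod m,
            (∑ i : ZMod m, ∑ j : Fin ℓ, a (i + d) j * b i j) • Y ^ (ZMod.val d) := by
          rw [Finset.sum_comm]
          refine Finset.sum_congr rfl fun d _ => ?_
          rw [Finset.sum_smul]
          exact Finset.sum_congr rfl fun i _ => by rw [add_comm d i]
  rw [hS, hkey]
  constructor
  · intro h d
    simpa [sub_neg_eq_add] using h (-d)
  · intro h k
    simpa [← sub_eq_add_neg] using h (-k)
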